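/- Let σ : ℝ → ℝ be a polynomial, s ∈ ℝ, z ∈ ℝⁿ, and set y = σ(∑_{j∈N} z_j + s), ỹ = σ(s). Let N⁺ = {j : z_j > 0} and N⁻ = {j : z_j ≤ 0}, and assume ∑_{j ∈ N⁺} z_j ≠ 0. Then for every i ∈ N⁺ and every α ∈ ℝ, the LRP-αβ attribution a_i = α · (z_i / ∑_{j∈N⁺} z_j) · (y − ỹ) satisfies a_i = α·[ ∑_{κ ∈ Ω_i} φ(κ) + ∑_{S ⊆ N, |S| > 1, i ∈ S} ∑_{κ ∈ Ω_S} (κ_i / ∑_{j∈N⁺} κ_j) · I(κ) + ∑_{∅ ≠ S ⊆ N⁻} ∑_{κ ∈ Ω_S} (z_i / ∑_{j∈N⁺} z_j) · I(κ) ]. -/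

import Mathlib

open Finset

/-- The Taylor interaction effect `I(κ)` of the one-layer module
`g(u) = σ(∑ⱼ uⱼ + s)` expanded at the baseline `0` and evaluated at `z`:
`I(κ) = (σ^{(|κ|)}(s)/|κ|!) · (|κ|!/∏ⱼ κⱼ!) · ∏ⱼ zⱼ^{κⱼ}`. -/
noncomputable def taylorEffect {n : ℕ} (σ : Polynomial ℝ) (s : ℝ) (z : Fin n → ℝ)
    (κ : Fin n → ℕ) : ℝ :=
  ((Polynomial.derivative^[∑ j, κ j] σ).eval s / ((∑ j, κ j).factorial : ℝ)) *
    ((Nat.multinomial Finset.univ κ : ℕ) : ℝ) * ∏ j, z j ^ κ j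

noncomputable def exch {n : ℕ} (i t : Fin n) (κ : Fin n → ℕ) : Fin n → ℕ :=
  Function.update (Function.update κ i (κ i - 1)) t (κ t + 1)

lemma exch_apply_t {n : ℕ} {i t : Fin n} (hit : t ≠ i) (κ : Fin n → ℕ) :
    exch i t κ t = κ t + 1 := by simp [exch]

lemma sum_exch {n : ℕ} (s : Finset (Fin n)) {i t : Fin n} (hi : i ∈ s) (ht : t ∈ s)
    (hit : t ≠ i) (κ : Fin n → ℕ) (hκ : κ i ≠ 0) :
    ∑ j ∈ s, exch i t κ j = ∑ j ∈ s, κ j := by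
  have hi' : i ∈ s.erase t := Finset.mem_erase.2 ⟨fun h => hit h.symm, hi⟩
  rw [← Finset.add_sum_erase _ _ ht, ← Finset.add_sum_erase _ _ hi',
      ← Finset.add_sum_erase _ (fun j => κ j) ht, ← Finset.add_sum_erase _ (fun j => κ j) hi']
  have h1 : exch i t κ t = κ t + 1 := exch_apply_t hit κ
  have h2 : exch i t κ i = κ i - 1 := by
    simp [exch, Function.update_of_ne (hit.symm : i ≠ t)]
  have h3 : ∀ j ∈ (s.erase t).erase i, exch i t κ j = κ j := by
    intro j hj
    have hji : j ≠ i := Finset.ne_of_mem_erase hj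
    have hjt : j ≠ t := Finset.ne_of_mem_erase (Finset.mem_of_mem_erase hj)
    simp [exch, Function.update_of_ne hjt, Function.update_of_ne hji]
  have h6 : ∑ j ∈ (s.erase t).erase i, exch i t κ j = ∑ j ∈ (s.erase t).erase i, κ j :=
    Finset.sum_congr rfl h3
  rw [h1, h2]
  omega

lemma exch_exch {n : ℕ} {i t : Fin n} (hit : t ≠ i) (κ : Fin n → ℕ) (hκ : κ i ≠ 0) :
    exch t i (exch i t κ) = κ := by
  funext j
  rcases eq_or_ne j i with rfl | hji
  · simp [exch, Function.update_of_ne hit.symm, Function.update_of_ne hit]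
    omega
  · rcases eq_or_ne j t with rfl | hjt
    · simp [exch, Function.update_of_ne hit, Function.update_of_ne hji]
    · simp [exch, Function.update_of_ne hji, Function.update_of_ne hjt]

lemma prod_exch {M : Type*} [CommSemiring M] {n : ℕ} (s : Finset (Fin n)) {i t : Fin n}
    (hi : i ∈ s) (ht : t ∈ s) (hit : t ≠ i) (κ : Fin n → ℕ) (g : Fin n → ℕ → M) (a b : M)
    (h1 : a * g i (κ i - 1) = g i (κ i)) (h2 : g t (κ t + 1) = b * g t (κ t)) :
    a * ∏ j ∈ s, g j (exch i t κ j) = b * ∏ j ∈ s, g j (κ j) := by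
  have hi' : i ∈ s.erase t := Finset.mem_erase.2 ⟨fun h => hit h.symm, hi⟩
  rw [← Finset.mul_prod_erase s _ ht, ← Finset.mul_prod_erase _ _ hi',
      ← Finset.mul_prod_erase s (fun j => g j (κ j)) ht,
      ← Finset.mul_prod_erase _ (fun j => g j (κ j)) hi']
  have h3 : ∀ j ∈ (s.erase t).erase i, g j (exch i t κ j) = g j (κ j) := by
    intro j hj
    have hji : j ≠ i := Finset.ne_of_mem_erase hj
    have hjt : j ≠ t := Finset.ne_of_mem_erase (Finset.mem_of_mem_erase hj)
    simp [exch, Function.update_of_ne hjt, Function.update_of_ne hji]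
  have h4 : exch i t κ t = κ t + 1 := exch_apply_t hit κ
  have h5 : exch i t κ i = κ i - 1 := by
    simp [exch, Function.update_of_ne (hit.symm : i ≠ t)]
  rw [Finset.prod_congr rfl h3, h4, h5, h2, ← h1]
  ring

lemma fact_exch {n : ℕ} {i t : Fin n} (hit : t ≠ i) (κ : Fin n → ℕ) (hκ : κ i ≠ 0) :
    κ i * ∏ j, (exch i t κ j).factorial = (κ t + 1) * ∏ j, (κ j).factorial :=
  prod_exch univ (mem_univ i) (mem_univ t) hit κ (fun _ m => m.factorial) _ _
    (Nat.mul_factorial_pred hκ) (Nat.factorial_succ _)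

lemma multinomial_exch {n : ℕ} {i t : Fin n} (hit : t ≠ i) (κ : Fin n → ℕ) (hκ : κ i ≠ 0) :
    κ i * Nat.multinomial univ κ = (κ t + 1) * Nat.multinomial univ (exch i t κ) := by
  have hs : ∑ j, exch i t κ j = ∑ j, κ j := sum_exch univ (mem_univ i) (mem_univ t) hit κ hκ
  have spec1 := Nat.multinomial_spec univ κ
  have spec2 := Nat.multinomial_spec univ (exch i t κ)
  have hA := fact_exch hit κ hκ
  have hpos : 0 < (∏ j, (κ j).factorial) * ∏ j, (exch i t κ j).factorial :=
    Nat.mul_pos (Finset.prod_pos fun _ _ => Nat.factorial_pos _)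
      (Finset.prod_pos fun _ _ => Nat.factorial_pos _)
  apply Nat.eq_of_mul_eq_mul_right hpos
  calc κ i * Nat.multinomial univ κ * ((∏ j, (κ j).factorial) * ∏ j, (exch i t κ j).factorial)
      = (κ i * ∏ j, (exch i t κ j).factorial) *
          ((∏ j, (κ j).factorial) * Nat.multinomial univ κ) := by ring
    _ = ((κ t + 1) * ∏ j, (κ j).factorial) * (∑ j, κ j).factorial := by rw [hA, spec1]
    _ = (κ t + 1) * ((∏ j, (exch i t κ j).factorial) * Nat.multinomial univ (exch i t κ)) *
          (∏ j, (κ j).factorial) := by rw [spec2, hs]; ring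
    _ = (κ t + 1) * Nat.multinomial univ (exch i t κ) *
          ((∏ j, (κ j).factorial) * ∏ j, (exch i t κ j).factorial) := by ring

lemma zpow_exch {n : ℕ} {i t : Fin n} (hit : t ≠ i) (κ : Fin n → ℕ) (hκ : κ i ≠ 0)
    (z : Fin n → ℝ) :
    z i * ∏ j, z j ^ exch i t κ j = z t * ∏ j, z j ^ κ j := by
  refine prod_exch univ (mem_univ i) (mem_univ t) hit κ (fun j m => z j ^ m) _ _ ?_ ?_
  · show z i * z i ^ (κ i - 1) = z i ^ κ i
    rw [← pow_succ']
    congr 1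
    omega
  · show z t ^ (κ t + 1) = z t * z t ^ κ t
    rw [pow_succ']

lemma term_exch {n : ℕ} {i t : Fin n} (hit : t ≠ i) (κ : Fin n → ℕ) (hκ : κ i ≠ 0)
    (σ : Polynomial ℝ) (s : ℝ) (z : Fin n → ℝ) (K : ℝ) :
    z t * ((κ i : ℝ) / K) * taylorEffect σ s z κ
      = z i * (((κ t : ℝ) + 1) / K) * taylorEffect σ s z (exch i t κ) := by
  have hs : ∑ j, exch i t κ j = ∑ j, κ j := sum_exch univ (mem_univ i) (mem_univ t) hit κ hκ
  have hm : ((κ i : ℝ)) * (Nat.multinomial univ κ : ℝ)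
      = ((κ t : ℝ) + 1) * (Nat.multinomial univ (exch i t κ) : ℝ) := by
    exact_mod_cast congrArg (Nat.cast : ℕ → ℝ) (multinomial_exch hit κ hκ)
  have hz := zpow_exch hit κ hκ z
  unfold taylorEffect
  rw [hs]
  set E := (Polynomial.derivative^[∑ j, κ j] σ).eval s
  set F := ((∑ j, κ j).factorial : ℝ)
  set M1 := (Nat.multinomial univ κ : ℝ)
  set M2 := (Nat.multinomial univ (exch i t κ) : ℝ)
  set P1 := ∏ j, z j ^ κ j
  set P2 := ∏ j, z j ^ exch i t κ j
  have key : (κ i : ℝ) * M1 * (z t * P1) = ((κ t : ℝ) + 1) * M2 * (z i * P2) := by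
    rw [hm, hz]
  linear_combination (E / F / K) * key

noncomputable def idxP (n d : ℕ) : Finset (Fin n → ℕ) :=
  (Finset.range (d + 1)).biUnion fun m => Finset.piAntidiag Finset.univ m

lemma mem_idxP {n d : ℕ} (κ : Fin n → ℕ) : κ ∈ idxP n d ↔ ∑ j, κ j ≤ d := by
  simp [idxP, Finset.mem_biUnion, Finset.mem_piAntidiag, Nat.lt_succ_iff]

lemma taylorEffect_eq_zero {n : ℕ} (σ : Polynomial ℝ) (s : ℝ) (z : Fin n → ℝ)
    {κ : Fin n → ℕ} (h : σ.natDegree < ∑ j, κ j) : taylorEffect σ s z κ = 0 := by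
  unfold taylorEffect
  rw [Polynomial.iterate_derivative_eq_zero h]
  simp

lemma taylorEffect_zero {n : ℕ} (σ : Polynomial ℝ) (s : ℝ) (z : Fin n → ℝ) :
    taylorEffect σ s z (fun _ => 0) = σ.eval s := by
  have : Nat.multinomial (univ : Finset (Fin n)) (fun _ => 0) = 1 := by
    have := Nat.multinomial_spec (univ : Finset (Fin n)) (fun _ => 0)
    simpa using this
  simp [taylorEffect, this]

lemma expansion {n : ℕ} (σ : Polynomial ℝ) (s : ℝ) (z : Fin n → ℝ) :
    σ.eval ((∑ j, z j) + s) = ∑ κ ∈ idxP n σ.natDegree, taylorEffect σ s z κ := by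
  have h1 : σ.eval ((∑ j, z j) + s) = (Polynomial.taylor s σ).eval (∑ j, z j) :=
    (Polynomial.taylor_eval s σ _).symm
  rw [h1, Polynomial.eval_eq_sum_range, Polynomial.natDegree_taylor]
  rw [idxP, Finset.sum_biUnion]
  · refine Finset.sum_congr rfl fun m hm => ?_
    have hc : (Polynomial.taylor s σ).coeff m
        = (Polynomial.derivative^[m] σ).eval s / (m.factorial : ℝ) := by
      rw [Polynomial.taylor_coeff]
      have h2 : (Polynomial.derivative^[m] σ) = m.factorial • (Polynomial.hasseDeriv m σ) := by
        rw [← Polynomial.factorial_smul_hasseDeriv]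
        rfl
      rw [h2]
      simp only [Polynomial.eval_smul, nsmul_eq_mul]
      field_simp
      rw [Polynomial.eval_mul, Polynomial.eval_natCast]
      ring
    rw [hc, Finset.sum_pow_eq_sum_piAntidiag, Finset.mul_sum]
    refine Finset.sum_congr rfl fun κ hκ => ?_
    rw [Finset.mem_piAntidiag] at hκ
    unfold taylorEffect
    rw [hκ.1]
    ring
  · intro a _ b _ hab
    simp only [Function.onFun]
    rw [Finset.disjoint_left]
    intro κ h1' h2'
    rw [Finset.mem_piAntidiag] at h1' h2'
    exact hab (h1'.1 ▸ h2'.1 ▸ rfl)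

lemma claimA {n : ℕ} (σ : Polynomial ℝ) (s : ℝ) (z : Fin n → ℝ) (i : Fin n) (hi : 0 < z i)
    (w : ℝ) (κ : Fin n → ℕ) :
    (if univ.filter (fun j => κ j ≠ 0) = {i} then taylorEffect σ s z κ else 0)
  + (if univ.filter (fun j => κ j ≠ 0) ∈
        (univ : Finset (Fin n)).powerset.filter (fun S => 1 < S.card ∧ i ∈ S)
      then ((κ i : ℝ) / ∑ j ∈ univ.filter (fun j => 0 < z j), (κ j : ℝ)) * taylorEffect σ s z κ
      else 0)
  + (if univ.filter (fun j => κ j ≠ 0) ∈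
        ((univ.filter (fun j => z j ≤ 0)).powerset.filter (fun S => S.Nonempty))
      then w * taylorEffect σ s z κ else 0)
  = (if 0 < ∑ j ∈ univ.filter (fun j => 0 < z j), κ j
      then ((κ i : ℝ) / ((∑ j ∈ univ.filter (fun j => 0 < z j), κ j : ℕ) : ℝ)) *
        taylorEffect σ s z κ
      else 0)
  + (if ((∑ j ∈ univ.filter (fun j => 0 < z j), κ j = 0) ∧ κ ≠ fun _ => 0)
      then w * taylorEffect σ s z κ else 0) := by
  have hcast : (∑ j ∈ univ.filter (fun j => 0 < z j), (κ j : ℝ))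
      = ((∑ j ∈ univ.filter (fun j => 0 < z j), κ j : ℕ) : ℝ) := by push_cast; rfl
  rw [hcast]
  have hiNp : i ∈ univ.filter (fun j => 0 < z j) := mem_filter.2 ⟨mem_univ i, hi⟩
  by_cases hpos : 0 < ∑ j ∈ univ.filter (fun j => 0 < z j), κ j
  · obtain ⟨j, hjNp, hj⟩ : ∃ j ∈ univ.filter (fun j => 0 < z j), κ j ≠ 0 :=
      Finset.exists_ne_zero_of_sum_ne_zero (Nat.pos_iff_ne_zero.mp hpos)
    have hzj : 0 < z j := (mem_filter.1 hjNp).2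
    have hc3 : univ.filter (fun j => κ j ≠ 0) ∉
        ((univ.filter (fun j => z j ≤ 0)).powerset.filter (fun S => S.Nonempty)) := by
      rw [mem_filter, mem_powerset]
      rintro ⟨hsub, -⟩
      have : j ∈ univ.filter (fun j => z j ≤ 0) := hsub (mem_filter.2 ⟨mem_univ j, hj⟩)
      exact absurd (mem_filter.1 this).2 (not_le.2 hzj)
    have hc5 : ¬ ((∑ j ∈ univ.filter (fun j => 0 < z j), κ j = 0) ∧ κ ≠ fun _ => 0) := by
      rintro ⟨h0, -⟩; omega
    rw [if_neg hc3, if_pos hpos, if_neg hc5, add_zero, add_zero]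
    by_cases hSi : univ.filter (fun j => κ j ≠ 0) = {i}
    · have hc2 : univ.filter (fun j => κ j ≠ 0) ∉
          (univ : Finset (Fin n)).powerset.filter (fun S => 1 < S.card ∧ i ∈ S) := by
        rw [mem_filter]
        rintro ⟨-, hcard, -⟩
        rw [hSi, card_singleton] at hcard
        omega
      rw [if_pos hSi, if_neg hc2, add_zero]
      have hki : κ i ≠ 0 := by
        have : i ∈ univ.filter (fun j => κ j ≠ 0) := hSi ▸ mem_singleton_self i
        exact (mem_filter.1 this).2
      have hKn : ∑ j ∈ univ.filter (fun j => 0 < z j), κ j = κ i := by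
        refine Finset.sum_eq_single_of_mem i hiNp fun b hb hbi => ?_
        by_contra hb0
        have : b ∈ univ.filter (fun j => κ j ≠ 0) := mem_filter.2 ⟨mem_univ b, hb0⟩
        rw [hSi, mem_singleton] at this
        exact hbi this
      rw [hKn]
      have hki' : ((κ i : ℝ)) ≠ 0 := Nat.cast_ne_zero.2 hki
      field_simp
    · rw [if_neg hSi, zero_add]
      by_cases hiS : κ i ≠ 0
      · have hiS' : i ∈ univ.filter (fun j => κ j ≠ 0) := mem_filter.2 ⟨mem_univ i, hiS⟩
        have hc2 : univ.filter (fun j => κ j ≠ 0) ∈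
            (univ : Finset (Fin n)).powerset.filter (fun S => 1 < S.card ∧ i ∈ S) := by
          rw [mem_filter, mem_powerset]
          refine ⟨subset_univ _, ?_, hiS'⟩
          rw [Finset.one_lt_card]
          by_contra h
          push_neg at h
          exact hSi (Finset.eq_singleton_iff_unique_mem.2 ⟨hiS', fun b hb => h b hb i hiS'⟩)
        rw [if_pos hc2]
      · push_neg at hiS
        have hc2 : univ.filter (fun j => κ j ≠ 0) ∉
            (univ : Finset (Fin n)).powerset.filter (fun S => 1 < S.card ∧ i ∈ S) := by
          rw [mem_filter]
          rintro ⟨-, -, hmem⟩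
          exact (mem_filter.1 hmem).2 hiS
        rw [if_neg hc2, hiS]
        simp
  · push_neg at hpos
    have hKn0 : ∑ j ∈ univ.filter (fun j => 0 < z j), κ j = 0 := by omega
    have hall : ∀ j ∈ univ.filter (fun j => 0 < z j), κ j = 0 :=
      Finset.sum_eq_zero_iff.1 hKn0
    have hki : κ i = 0 := hall i hiNp
    have hc2 : univ.filter (fun j => κ j ≠ 0) ∉
        (univ : Finset (Fin n)).powerset.filter (fun S => 1 < S.card ∧ i ∈ S) := by
      rw [mem_filter]
      rintro ⟨-, -, hmem⟩
      exact (mem_filter.1 hmem).2 hki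
    have hSi : univ.filter (fun j => κ j ≠ 0) ≠ {i} := by
      intro h
      have : i ∈ univ.filter (fun j => κ j ≠ 0) := h ▸ mem_singleton_self i
      exact (mem_filter.1 this).2 hki
    rw [if_neg hSi, if_neg hc2, if_neg (by omega : ¬ 0 < ∑ j ∈ univ.filter (fun j => 0 < z j), κ j),
        zero_add, zero_add, zero_add]
    by_cases h0 : κ = fun _ => 0
    · have hc3 : univ.filter (fun j => κ j ≠ 0) ∉
          ((univ.filter (fun j => z j ≤ 0)).powerset.filter (fun S => S.Nonempty)) := by
        rw [mem_filter]
        rintro ⟨-, ⟨b, hb⟩⟩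
        have := (mem_filter.1 hb).2
        rw [h0] at this
        exact this rfl
      rw [if_neg hc3, if_neg (by rintro ⟨-, hne⟩; exact hne h0)]
    · have hc3 : univ.filter (fun j => κ j ≠ 0) ∈
          ((univ.filter (fun j => z j ≤ 0)).powerset.filter (fun S => S.Nonempty)) := by
        rw [mem_filter, mem_powerset]
        constructor
        · intro b hb
          have hb0 : κ b ≠ 0 := (mem_filter.1 hb).2
          refine mem_filter.2 ⟨mem_univ b, ?_⟩
          by_contra hzb
          push_neg at hzb
          exact hb0 (hall b (mem_filter.2 ⟨mem_univ b, hzb⟩))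
        · obtain ⟨b, hb⟩ : ∃ b, κ b ≠ 0 := by
            by_contra hc
            push_neg at hc
            exact h0 (funext hc)
          exact ⟨b, mem_filter.2 ⟨mem_univ b, hb⟩⟩
      rw [if_pos hc3, if_pos ⟨hKn0, h0⟩]

lemma claimC {n : ℕ} (σ : Polynomial ℝ) (s : ℝ) (z : Fin n → ℝ)
    (hNp : ∑ j ∈ univ.filter (fun j => 0 < z j), z j ≠ 0)
    (i : Fin n) (hi : 0 < z i) :
    ∑ κ ∈ idxP n σ.natDegree,
      (if 0 < ∑ j ∈ univ.filter (fun j => 0 < z j), κ j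
        then ((κ i : ℝ) / ((∑ j ∈ univ.filter (fun j => 0 < z j), κ j : ℕ) : ℝ)) *
          taylorEffect σ s z κ
        else 0)
  = (z i / ∑ j ∈ univ.filter (fun j => 0 < z j), z j) *
      ∑ κ ∈ idxP n σ.natDegree,
        (if 0 < ∑ j ∈ univ.filter (fun j => 0 < z j), κ j then taylorEffect σ s z κ else 0) := by
  have hiNp : i ∈ univ.filter (fun j => 0 < z j) := mem_filter.2 ⟨mem_univ i, hi⟩
  rw [div_mul_eq_mul_div, eq_div_iff hNp, Finset.mul_sum, Finset.mul_sum]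
  -- LHS : ∑ t ∈ Np, (∑ κ, ...) * z t ; we write it via sum over Np
  calc ∑ t ∈ univ.filter (fun j => 0 < z j),
        (∑ κ ∈ idxP n σ.natDegree,
          (if 0 < ∑ j ∈ univ.filter (fun j => 0 < z j), κ j
            then ((κ i : ℝ) / ((∑ j ∈ univ.filter (fun j => 0 < z j), κ j : ℕ) : ℝ)) *
              taylorEffect σ s z κ
            else 0)) * z t
      = ∑ t ∈ univ.filter (fun j => 0 < z j), ∑ κ ∈ idxP n σ.natDegree,
          (if 0 < ∑ j ∈ univ.filter (fun j => 0 < z j), κ j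
            then ((κ t : ℝ) / ((∑ j ∈ univ.filter (fun j => 0 < z j), κ j : ℕ) : ℝ)) *
              (z i * taylorEffect σ s z κ)
            else 0) := ?_
    _ = ∑ κ ∈ idxP n σ.natDegree,
          z i * (if 0 < ∑ j ∈ univ.filter (fun j => 0 < z j), κ j
            then taylorEffect σ s z κ else 0) := ?_
  · -- per t
    refine Finset.sum_congr rfl fun t htNp => ?_
    have hzt : 0 < z t := (mem_filter.1 htNp).2
    have htNp' : t ∈ univ.filter (fun j => 0 < z j) := htNp
    rw [Finset.sum_mul]
    rcases eq_or_ne t i with rfl | hit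
    · refine Finset.sum_congr rfl fun κ _ => ?_
      split_ifs with h
      · ring
      · simp
    · -- exchange bijection
      have hL : ∀ κ ∈ idxP n σ.natDegree,
          (if 0 < ∑ j ∈ univ.filter (fun j => 0 < z j), κ j
            then ((κ i : ℝ) / ((∑ j ∈ univ.filter (fun j => 0 < z j), κ j : ℕ) : ℝ)) *
              taylorEffect σ s z κ
            else 0) * z t
          = (if κ i ≠ 0 then
              z t * ((κ i : ℝ) / ((∑ j ∈ univ.filter (fun j => 0 < z j), κ j : ℕ) : ℝ)) *
                taylorEffect σ s z κ
            else 0) := by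
        intro κ _
        by_cases hki : κ i ≠ 0
        · have hpos : 0 < ∑ j ∈ univ.filter (fun j => 0 < z j), κ j :=
            lt_of_lt_of_le (Nat.pos_of_ne_zero hki)
              (Finset.single_le_sum (fun _ _ => Nat.zero_le _) hiNp)
          rw [if_pos hpos, if_pos hki]
          ring
        · push_neg at hki
          rw [if_neg (not_not_intro hki)]
          split_ifs with h
          · rw [hki]; simp
          · simp
      have hR : ∀ κ ∈ idxP n σ.natDegree,
          (if 0 < ∑ j ∈ univ.filter (fun j => 0 < z j), κ j
            then ((κ t : ℝ) / ((∑ j ∈ univ.filter (fun j => 0 < z j), κ j : ℕ) : ℝ)) *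
              (z i * taylorEffect σ s z κ)
            else 0)
          = (if κ t ≠ 0 then
              z i * ((κ t : ℝ) / ((∑ j ∈ univ.filter (fun j => 0 < z j), κ j : ℕ) : ℝ)) *
                taylorEffect σ s z κ
            else 0) := by
        intro κ _
        by_cases hkt : κ t ≠ 0
        · have hpos : 0 < ∑ j ∈ univ.filter (fun j => 0 < z j), κ j :=
            lt_of_lt_of_le (Nat.pos_of_ne_zero hkt)
              (Finset.single_le_sum (fun _ _ => Nat.zero_le _) htNp')
          rw [if_pos hpos, if_pos hkt]
          ring
        · push_neg at hkt
          rw [if_neg (not_not_intro hkt)]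
          split_ifs with h
          · rw [hkt]; simp
          · rfl
      rw [Finset.sum_congr rfl hL, Finset.sum_congr rfl hR, ← Finset.sum_filter,
          ← Finset.sum_filter]
      refine Finset.sum_nbij' (exch i t) (exch t i) ?_ ?_ ?_ ?_ ?_
      · intro κ hκ
        rw [Finset.mem_filter] at hκ ⊢
        obtain ⟨hκP, hκi⟩ := hκ
        refine ⟨?_, ?_⟩
        · rw [mem_idxP] at hκP ⊢
          rw [sum_exch univ (mem_univ i) (mem_univ t) hit κ hκi]
          exact hκP
        · rw [exch_apply_t hit]
          omega
      · intro κ hκ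
        rw [Finset.mem_filter] at hκ ⊢
        obtain ⟨hκP, hκt⟩ := hκ
        refine ⟨?_, ?_⟩
        · rw [mem_idxP] at hκP ⊢
          rw [sum_exch univ (mem_univ t) (mem_univ i) hit.symm κ hκt]
          exact hκP
        · rw [exch_apply_t hit.symm]
          omega
      · intro κ hκ
        exact exch_exch hit κ (Finset.mem_filter.1 hκ).2
      · intro κ hκ
        exact exch_exch hit.symm κ (Finset.mem_filter.1 hκ).2
      · intro κ hκ
        have hκi : κ i ≠ 0 := (Finset.mem_filter.1 hκ).2
        have h1 : exch i t κ t = κ t + 1 := exch_apply_t hit κ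
        have h2 : ∑ j ∈ univ.filter (fun j => 0 < z j), exch i t κ j
            = ∑ j ∈ univ.filter (fun j => 0 < z j), κ j :=
          sum_exch _ hiNp htNp' hit κ hκi
        rw [h1, h2]
        push_cast
        exact term_exch hit κ hκi σ s z _
  · -- collapse the t-sum
    rw [Finset.sum_comm]
    refine Finset.sum_congr rfl fun κ _ => ?_
    by_cases hpos : 0 < ∑ j ∈ univ.filter (fun j => 0 < z j), κ j
    · have hKne : ((∑ j ∈ univ.filter (fun j => 0 < z j), κ j : ℕ) : ℝ) ≠ 0 :=
        Nat.cast_ne_zero.2 hpos.ne'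
      rw [if_pos hpos]
      calc ∑ t ∈ univ.filter (fun j => 0 < z j),
            (if 0 < ∑ j ∈ univ.filter (fun j => 0 < z j), κ j
              then ((κ t : ℝ) / ((∑ j ∈ univ.filter (fun j => 0 < z j), κ j : ℕ) : ℝ)) *
                (z i * taylorEffect σ s z κ)
              else 0)
          = ∑ t ∈ univ.filter (fun j => 0 < z j),
              ((κ t : ℝ) / ((∑ j ∈ univ.filter (fun j => 0 < z j), κ j : ℕ) : ℝ)) *
                (z i * taylorEffect σ s z κ) :=
            Finset.sum_congr rfl fun t _ => if_pos hpos
        _ = ((∑ t ∈ univ.filter (fun j => 0 < z j), (κ t : ℝ)) /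
              ((∑ j ∈ univ.filter (fun j => 0 < z j), κ j : ℕ) : ℝ)) *
                (z i * taylorEffect σ s z κ) := by
            rw [← Finset.sum_mul, ← Finset.sum_div]
        _ = z i * taylorEffect σ s z κ := by
            have : (∑ t ∈ univ.filter (fun j => 0 < z j), (κ t : ℝ))
                = ((∑ j ∈ univ.filter (fun j => 0 < z j), κ j : ℕ) : ℝ) := by push_cast; rfl
            rw [this, div_self hKne, one_mul]
    · rw [if_neg hpos]
      simp [if_neg hpos]

/-- LRP-αβ, positive group.  For a polynomial activation `σ`, with
`y = σ(∑ⱼ zⱼ + s)`, `ỹ = σ(s)`, `N⁺ = {j : zⱼ > 0}`, `N⁻ = {j : zⱼ ≤ 0}` and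
`∑_{j∈N⁺} zⱼ ≠ 0`: for every `i ∈ N⁺` and every `α ∈ ℝ`, the LRP-αβ attribution
`aᵢ = α·(zᵢ/∑_{j∈N⁺} zⱼ)·(y − ỹ)` decomposes into Taylor independent and interaction
effects with the stated allocation ratios. -/
theorem lrp_alpha_beta_pos {n : ℕ} (hn : 1 ≤ n) (σ : Polynomial ℝ) (s : ℝ)
    (z : Fin n → ℝ)
    (hNp : ∑ j ∈ univ.filter (fun j => 0 < z j), z j ≠ 0)
    (i : Fin n) (hi : 0 < z i) (α : ℝ) :
    α * (z i / ∑ j ∈ univ.filter (fun j => 0 < z j), z j) *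
        (σ.eval (∑ j, z j + s) - σ.eval s)
      = α * (
          (∑' κ : Fin n → ℕ,
              if univ.filter (fun j => κ j ≠ 0) = {i} then taylorEffect σ s z κ else 0)
        + (∑ S ∈ (univ : Finset (Fin n)).powerset.filter (fun S => 1 < S.card ∧ i ∈ S),
            ∑' κ : Fin n → ℕ,
              if univ.filter (fun j => κ j ≠ 0) = S then
                ((κ i : ℝ) / ∑ j ∈ univ.filter (fun j => 0 < z j), (κ j : ℝ)) *
                  taylorEffect σ s z κ
              else 0)
        + (∑ S ∈ (univ.filter (fun j => z j ≤ 0)).powerset.filter (fun S => S.Nonempty),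
            ∑' κ : Fin n → ℕ,
              if univ.filter (fun j => κ j ≠ 0) = S then
                (z i / ∑ j ∈ univ.filter (fun j => 0 < z j), z j) *
                  taylorEffect σ s z κ
              else 0)) := by
  rw [mul_assoc]
  refine congrArg (fun r => α * r) ?_
  set P := idxP n σ.natDegree with hPdef
  have hvanish : ∀ κ : Fin n → ℕ, κ ∉ P → taylorEffect σ s z κ = 0 := by
    intro κ hκ
    rw [hPdef, mem_idxP] at hκ
    exact taylorEffect_eq_zero σ s z (by omega)
  -- convert tsums to finite sums over P
  have hA : (∑' κ : Fin n → ℕ,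
        if univ.filter (fun j => κ j ≠ 0) = {i} then taylorEffect σ s z κ else 0)
      = ∑ κ ∈ P, (if univ.filter (fun j => κ j ≠ 0) = {i} then taylorEffect σ s z κ else 0) :=
    tsum_eq_sum fun κ hκ => by
      have h0 := hvanish κ hκ
      split_ifs <;> simp [h0]
  have hB : ∀ S : Finset (Fin n),
      (∑' κ : Fin n → ℕ,
        if univ.filter (fun j => κ j ≠ 0) = S then
          ((κ i : ℝ) / ∑ j ∈ univ.filter (fun j => 0 < z j), (κ j : ℝ)) * taylorEffect σ s z κ
        else 0)
      = ∑ κ ∈ P, (if univ.filter (fun j => κ j ≠ 0) = S then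
          ((κ i : ℝ) / ∑ j ∈ univ.filter (fun j => 0 < z j), (κ j : ℝ)) * taylorEffect σ s z κ
        else 0) := fun S =>
    tsum_eq_sum fun κ hκ => by
      have h0 := hvanish κ hκ
      split_ifs <;> simp [h0]
  have hC : ∀ S : Finset (Fin n),
      (∑' κ : Fin n → ℕ,
        if univ.filter (fun j => κ j ≠ 0) = S then
          (z i / ∑ j ∈ univ.filter (fun j => 0 < z j), z j) * taylorEffect σ s z κ
        else 0)
      = ∑ κ ∈ P, (if univ.filter (fun j => κ j ≠ 0) = S then
          (z i / ∑ j ∈ univ.filter (fun j => 0 < z j), z j) * taylorEffect σ s z κ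
        else 0) := fun S =>
    tsum_eq_sum fun κ hκ => by
      have h0 := hvanish κ hκ
      split_ifs <;> simp [h0]
  rw [hA, Finset.sum_congr rfl fun S _ => hB S, Finset.sum_congr rfl fun S _ => hC S]
  -- collapse the S-sums
  rw [Finset.sum_comm
    (s := (univ : Finset (Fin n)).powerset.filter (fun S => 1 < S.card ∧ i ∈ S)),
    Finset.sum_comm
    (s := (univ.filter (fun j => z j ≤ 0)).powerset.filter (fun S => S.Nonempty))]
  have hBcol : ∀ κ : Fin n → ℕ,
      (∑ S ∈ (univ : Finset (Fin n)).powerset.filter (fun S => 1 < S.card ∧ i ∈ S),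
        if univ.filter (fun j => κ j ≠ 0) = S then
          ((κ i : ℝ) / ∑ j ∈ univ.filter (fun j => 0 < z j), (κ j : ℝ)) * taylorEffect σ s z κ
        else 0)
      = (if univ.filter (fun j => κ j ≠ 0) ∈
            (univ : Finset (Fin n)).powerset.filter (fun S => 1 < S.card ∧ i ∈ S)
          then ((κ i : ℝ) / ∑ j ∈ univ.filter (fun j => 0 < z j), (κ j : ℝ)) *
            taylorEffect σ s z κ
          else 0) := fun κ => Finset.sum_ite_eq _ _ _
  have hCcol : ∀ κ : Fin n → ℕ,
      (∑ S ∈ (univ.filter (fun j => z j ≤ 0)).powerset.filter (fun S => S.Nonempty),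
        if univ.filter (fun j => κ j ≠ 0) = S then
          (z i / ∑ j ∈ univ.filter (fun j => 0 < z j), z j) * taylorEffect σ s z κ
        else 0)
      = (if univ.filter (fun j => κ j ≠ 0) ∈
            (univ.filter (fun j => z j ≤ 0)).powerset.filter (fun S => S.Nonempty)
          then (z i / ∑ j ∈ univ.filter (fun j => 0 < z j), z j) * taylorEffect σ s z κ
          else 0) := fun κ => Finset.sum_ite_eq _ _ _
  rw [Finset.sum_congr rfl fun κ _ => hBcol κ, Finset.sum_congr rfl fun κ _ => hCcol κ]
  rw [← Finset.sum_add_distrib, ← Finset.sum_add_distrib]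
  rw [Finset.sum_congr rfl fun κ _ =>
    claimA σ s z i hi (z i / ∑ j ∈ univ.filter (fun j => 0 < z j), z j) κ]
  rw [Finset.sum_add_distrib]
  -- left-hand side
  rw [expansion σ s z]
  have hy0 : σ.eval s = taylorEffect σ s z (fun _ => 0) := (taylorEffect_zero σ s z).symm
  have h0P : (fun _ => 0 : Fin n → ℕ) ∈ P := by rw [hPdef, mem_idxP]; simp
  have hsub : (∑ κ ∈ P, taylorEffect σ s z κ) - σ.eval s
      = ∑ κ ∈ P, (if κ = (fun _ => 0) then 0 else taylorEffect σ s z κ) := by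
    rw [hy0]
    have h1 : ∀ κ ∈ P, (if κ = (fun _ => 0) then 0 else taylorEffect σ s z κ)
        = taylorEffect σ s z κ - (if κ = (fun _ => 0) then taylorEffect σ s z κ else 0) := by
      intro κ _
      split_ifs with h
      · rw [h]; ring
      · ring
    rw [Finset.sum_congr rfl h1, Finset.sum_sub_distrib,
        Finset.sum_ite_eq' P (fun _ => 0 : Fin n → ℕ) (taylorEffect σ s z), if_pos h0P]
  rw [hsub, Finset.mul_sum]
  have hsplit : ∀ κ : Fin n → ℕ,
      (z i / ∑ j ∈ univ.filter (fun j => 0 < z j), z j) *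
        (if κ = (fun _ => 0) then 0 else taylorEffect σ s z κ)
      = (z i / ∑ j ∈ univ.filter (fun j => 0 < z j), z j) *
          (if 0 < ∑ j ∈ univ.filter (fun j => 0 < z j), κ j then taylorEffect σ s z κ else 0)
        + (if ((∑ j ∈ univ.filter (fun j => 0 < z j), κ j = 0) ∧ κ ≠ fun _ => 0)
            then (z i / ∑ j ∈ univ.filter (fun j => 0 < z j), z j) * taylorEffect σ s z κ
            else 0) := by
    intro κ
    by_cases h0 : κ = (fun _ => 0)
    · have : ∑ j ∈ univ.filter (fun j => 0 < z j), κ j = 0 := by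
        rw [h0]; simp
      rw [if_pos h0, if_neg (by omega), if_neg (by rintro ⟨-, hne⟩; exact hne h0)]
      simp
    · rw [if_neg h0]
      by_cases hpos : 0 < ∑ j ∈ univ.filter (fun j => 0 < z j), κ j
      · rw [if_pos hpos, if_neg (by rintro ⟨hz0, -⟩; omega)]
        ring
      · rw [if_neg hpos, if_pos ⟨by omega, h0⟩]
        ring
  rw [Finset.sum_congr rfl fun κ _ => hsplit κ, Finset.sum_add_distrib, ← Finset.mul_sum]
  congr 1
  exact (claimC σ s z hNp i hi).symm
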